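/- Let q = p^m be a prime power with p ≥ 7 prime. Define M_a := 2a if q ≡ 2 (mod 3) and a is odd, and M_a := a otherwise; M_a is the maximal size of an orbit in O_q(a). There exists a constant C > 0, depending only on q, such that for every integer a ≥ 1 and every finite field F with q^a elements, the number of pairs (j, x) ∈ (ZMod 3)ˣ × Fˣ whose orbit under (j,x) ↦ (q·j, x^q) has fewer than M_a elements is at most C·q^{a/2}. Equivalently, the sum of the sizes |o| over all non-maximal orbits o ∈ O_q(a) is at most C·q^{a/2}. -/

import Mathlib

/-- The orbit of `(j, x)` under the map `(j, x) ↦ (q·j, x^q)` on `(ZMod 3)ˣ × Fˣ`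
(where `q·j` is multiplication by `q mod 3`). -/
def twistedOrbit (q : ℕ) {F : Type*} [Field F] (w : (ZMod 3)ˣ × Fˣ) :
    Set ((ZMod 3)ˣ × Fˣ) :=
  {z : (ZMod 3)ˣ × Fˣ | ∃ n : ℕ,
    (z.1 : ZMod 3) = (q : ZMod 3) ^ n * (w.1 : ZMod 3) ∧ z.2 = w.2 ^ q ^ n}

/-- With `M_a = 2a` when `q ≡ 2 (mod 3)` and `a` is odd, and `M_a = a` otherwise
(the maximal orbit size in `O_q(a)`), the number of pairs `(j, x) ∈ (ZMod 3)ˣ × Fˣ`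
whose orbit under `(j, x) ↦ (q·j, x^q)` has fewer than `M_a` elements is at most
`C·q^{a/2}` for a constant `C` depending only on `q`. -/
theorem stmt_16 (p m q : ℕ) (hp : p.Prime) (hp7 : 7 ≤ p) (hm : 1 ≤ m) (hq : q = p ^ m) :
    ∃ C : ℝ, 0 < C ∧
      ∀ (a : ℕ), 1 ≤ a →
      ∀ (F : Type) [Field F] [Fintype F], Fintype.card F = q ^ a →
        (({z : (ZMod 3)ˣ × Fˣ |
            (twistedOrbit q z).ncard < (if q % 3 = 2 ∧ Odd a then 2 * a else a)}).ncard : ℝ) ≤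
          C * (q : ℝ) ^ ((a : ℝ) / 2) := by
  classical
  have hq2 : 7 ≤ q := by
    have : p ≤ p ^ m := Nat.le_self_pow (by omega) p
    omega
  have hq3 : Nat.Coprime q 3 := by
    have hp3 : Nat.Coprime p 3 := (Nat.coprime_primes hp (by norm_num)).mpr (by omega)
    rw [hq]; exact hp3.pow_left m
  refine ⟨2 * q, by positivity, ?_⟩
  intro a ha F _ _ hF
  haveI : DecidableEq F := Classical.decEq F
  have hcardU : Fintype.card Fˣ = q ^ a - 1 := by rw [Fintype.card_units, hF]
  have hqa1 : q ^ a - 1 + 1 = q ^ a := by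
    have : 1 ≤ q ^ a := Nat.one_le_pow _ _ (by omega)
    omega
  -- `x ^ (q^a) = x` for all units
  have hxa : ∀ x : Fˣ, x ^ q ^ a = x := by
    intro x
    have h1 : x ^ (q ^ a - 1) = 1 := by rw [← hcardU]; exact pow_card_eq_one
    calc x ^ q ^ a = x ^ (q ^ a - 1 + 1) := by rw [hqa1]
    _ = x := by rw [pow_succ, h1, one_mul]
  -- the `q^d`-power map is injective on units
  have hcop : Nat.Coprime q (q ^ a - 1) := by
    have h1 : Nat.Coprime (q ^ a) (q ^ a - 1) := by
      have h0 := Nat.coprime_add_self_left.mpr (Nat.coprime_one_left (q ^ a - 1))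
      rwa [show 1 + (q ^ a - 1) = q ^ a by omega] at h0
    exact (Nat.coprime_pow_left_iff (by omega) _ _).mp h1
  have hinj : ∀ (d : ℕ) (x y : Fˣ), x ^ q ^ d = y ^ q ^ d → x = y := by
    intro d x y h
    have hg : (x * y⁻¹) ^ q ^ d = 1 := by
      rw [mul_pow, inv_pow, h, mul_inv_cancel]
    have h1 : orderOf (x * y⁻¹) ∣ q ^ d := orderOf_dvd_of_pow_eq_one hg
    have h2 : orderOf (x * y⁻¹) ∣ q ^ a - 1 := hcardU ▸ orderOf_dvd_card
    have h3 : orderOf (x * y⁻¹) ∣ 1 := by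
      have := Nat.dvd_gcd h1 h2
      rwa [Nat.Coprime.gcd_eq_one (hcop.pow_left d)] at this
    have : x * y⁻¹ = 1 := orderOf_eq_one_iff.mp (Nat.eq_one_of_dvd_one h3)
    exact mul_inv_eq_one.mp this
  -- shift lemma
  have hshift : ∀ (n d : ℕ) (x : Fˣ), x ^ q ^ n = x ^ q ^ (n + d) → x ^ q ^ d = x := by
    intro n d x h
    apply hinj n
    rw [← pow_mul, ← pow_add, Nat.add_comm d n]
    exact h.symm
  -- key claim: small orbit implies small period
  have key : ∀ z : (ZMod 3)ˣ × Fˣ,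
      (twistedOrbit q z).ncard < (if q % 3 = 2 ∧ Odd a then 2 * a else a) →
      ∃ t, 1 ≤ t ∧ t ≤ a / 2 ∧ z.2 ^ q ^ t = z.2 := by
    intro z hz
    set M := (if q % 3 = 2 ∧ Odd a then 2 * a else a) with hM
    -- first: some period < a
    have H : ∃ t, (0 < t ∧ t < a) ∧ z.2 ^ q ^ t = z.2 := by
      by_contra hC
      push_neg at hC
      -- build M distinct elements of the orbit
      set u : (ZMod 3)ˣ := ZMod.unitOfCoprime q hq3 with hu
      set f : ℕ → (ZMod 3)ˣ × Fˣ := fun n => (u ^ n * z.1, z.2 ^ q ^ n) with hf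
      have hmem : ∀ n, f n ∈ twistedOrbit q z := by
        intro n
        refine ⟨n, ?_, rfl⟩
        simp only [hf, Units.val_mul, Units.val_pow_eq_pow_val, hu,
          ZMod.coe_unitOfCoprime]
      have hper : ∀ n d, 0 < d → d < M → z.2 ^ q ^ n ≠ z.2 ^ q ^ (n + d) ∨
          u ^ n * z.1 ≠ u ^ (n + d) * z.1 := by
        intro n d hd hdM
        by_cases hcase : q % 3 = 2 ∧ Odd a
        · -- M = 2a
          rw [hM, if_pos hcase] at hdM
          by_cases hda : d < a
          · left
            intro h
            exact hC d ⟨hd, hda⟩ (hshift n d z.2 h)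
          · by_cases hdea : d = a
            · right
              intro h
              have h1 : u ^ n = u ^ (n + d) := mul_right_cancel h
              have h2 : u ^ d = 1 := by
                rw [pow_add] at h1
                exact left_eq_mul.mp h1
              have h3 : ((u : ZMod 3)) ^ d = 1 := by
                rw [← Units.val_pow_eq_pow_val, h2, Units.val_one]
              rw [hu, ZMod.coe_unitOfCoprime] at h3
              have hq3' : (q : ZMod 3) = 2 := by
                rw [← ZMod.natCast_mod, hcase.1]; norm_num
              rw [hq3', hdea] at h3
              have h2neg : (2 : ZMod 3) = -1 := by decide
              rw [h2neg, (hcase.2).neg_one_pow] at h3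
              exact absurd h3 (by decide)
            · -- a < d < 2a
              left
              intro h
              have h4 : z.2 ^ q ^ d = z.2 := hshift n d z.2 h
              have h5 : z.2 ^ q ^ (d - a) = z.2 := by
                apply hinj a
                have hda' : d - a + a = d := by omega
                rw [hxa z.2, ← pow_mul, ← pow_add, hda']
                exact h4
              exact hC (d - a) ⟨by omega, by omega⟩ h5
        · -- M = a
          rw [hM, if_neg hcase] at hdM
          left
          intro h
          exact hC d ⟨hd, hdM⟩ (hshift n d z.2 h)
      have hfinj : Set.InjOn f ↑(Finset.range M) := by
        intro n hn m hm' hfe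
        by_contra hne
        rcases Nat.lt_or_ge n m with h | h
        · have := hper n (m - n) (by omega)
            (by simp only [Finset.coe_range, Set.mem_Iio] at hm'; omega)
          rw [Nat.add_sub_cancel' (le_of_lt h)] at this
          rcases this with h' | h'
          · exact h' (congrArg Prod.snd hfe)
          · exact h' (congrArg Prod.fst hfe)
        · have hlt : m < n := by omega
          have := hper m (n - m) (by omega)
            (by simp only [Finset.coe_range, Set.mem_Iio] at hn; omega)
          rw [Nat.add_sub_cancel' (le_of_lt hlt)] at this
          rcases this with h' | h'
          · exact h' (congrArg Prod.snd hfe.symm)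
          · exact h' (congrArg Prod.fst hfe.symm)
      have hcard : M ≤ (twistedOrbit q z).ncard := by
        have h1 : ((Finset.range M).image f : Set ((ZMod 3)ˣ × Fˣ)) ⊆ twistedOrbit q z := by
          intro w hw
          simp only [Finset.coe_image, Set.mem_image, Finset.mem_coe] at hw
          obtain ⟨n, _, rfl⟩ := hw
          exact hmem n
        calc M = ((Finset.range M).image f).card := by
              rw [Finset.card_image_of_injOn hfinj, Finset.card_range]
        _ = (((Finset.range M).image f : Set ((ZMod 3)ˣ × Fˣ))).ncard :=
              (Set.ncard_coe_finset _).symm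
        _ ≤ (twistedOrbit q z).ncard := Set.ncard_le_ncard h1 (Set.toFinite _)
      omega
    -- now take the minimal period and show it divides a
    have hex : ∃ t, 0 < t ∧ z.2 ^ q ^ t = z.2 := by
      obtain ⟨t, ⟨ht0, _⟩, ht⟩ := H
      exact ⟨t, ht0, ht⟩
    set t0 := Nat.find hex with ht0def
    obtain ⟨ht0pos, ht0per⟩ := Nat.find_spec hex
    have ht0lt : t0 < a := by
      obtain ⟨t, ⟨ht0, hta⟩, ht⟩ := H
      have : t0 ≤ t := Nat.find_min' hex ⟨ht0, ht⟩
      omega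
    have hmul : ∀ s : ℕ, z.2 ^ q ^ (t0 * s) = z.2 := by
      intro s
      induction s with
      | zero => simp
      | succ s ih =>
        have : t0 * (s + 1) = t0 * s + t0 := by ring
        rw [this, pow_add, pow_mul, ih, ht0per]
    have hdvd : t0 ∣ a := by
      have heq : t0 * (a / t0) + a % t0 = a := by
        exact Nat.div_add_mod a t0
      have h1 : (z.2 ^ q ^ (t0 * (a / t0))) ^ q ^ (a % t0) = z.2 := by
        rw [← pow_mul, ← pow_add, heq]; exact hxa z.2
      rw [hmul (a / t0)] at h1
      by_contra hnd
      have hmodpos : 0 < a % t0 := Nat.pos_of_ne_zero (fun h => hnd (Nat.dvd_of_mod_eq_zero h))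
      exact Nat.find_min hex (Nat.mod_lt a ht0pos) ⟨hmodpos, h1⟩
    refine ⟨t0, ht0pos, ?_, ht0per⟩
    obtain ⟨k, hk⟩ := hdvd
    have hk2 : 2 ≤ k := by
      rcases Nat.lt_or_ge k 2 with h | h
      · interval_cases k <;> omega
      · exact h
    rw [Nat.le_div_iff_mul_le (by norm_num)]
    calc t0 * 2 ≤ t0 * k := Nat.mul_le_mul_left t0 hk2
    _ = a := hk.symm
  -- counting
  set k := a / 2 with hk
  set bigF : Finset ((ZMod 3)ˣ × Fˣ) :=
    (Finset.Icc 1 k).biUnion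
      (fun t => Finset.univ.filter (fun zz : (ZMod 3)ˣ × Fˣ => zz.2 ^ q ^ t = zz.2)) with hbigF
  have hsub : {z : (ZMod 3)ˣ × Fˣ |
      (twistedOrbit q z).ncard < (if q % 3 = 2 ∧ Odd a then 2 * a else a)} ⊆ ↑bigF := by
    intro z hz
    obtain ⟨t, ht1, ht2, ht3⟩ := key z hz
    simp only [hbigF, Finset.coe_biUnion, Set.mem_iUnion, Finset.mem_coe, Finset.mem_Icc,
      Finset.mem_filter, Finset.mem_univ, true_and]
    exact ⟨t, ⟨ht1, ht2⟩, ht3⟩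
  have h1 : ({z : (ZMod 3)ˣ × Fˣ |
      (twistedOrbit q z).ncard < (if q % 3 = 2 ∧ Odd a then 2 * a else a)}).ncard ≤ bigF.card := by
    calc _ ≤ (↑bigF : Set ((ZMod 3)ˣ × Fˣ)).ncard := Set.ncard_le_ncard hsub (Set.toFinite _)
    _ = bigF.card := Set.ncard_coe_finset _
  -- bound each filter
  have hfilt : ∀ t : ℕ, 1 ≤ t →
      (Finset.univ.filter (fun zz : (ZMod 3)ˣ × Fˣ => zz.2 ^ q ^ t = zz.2)).card ≤ 2 * q ^ t := by
    intro t ht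
    have hqt1 : 1 ≤ q ^ t := Nat.one_le_pow _ _ (by omega)
    have hsplit : Finset.univ.filter (fun zz : (ZMod 3)ˣ × Fˣ => zz.2 ^ q ^ t = zz.2)
        = Finset.univ ×ˢ (Finset.univ.filter (fun x : Fˣ => x ^ q ^ t = x)) := by
      ext ⟨j, x⟩
      simp [Finset.mem_product]
    rw [hsplit, Finset.card_product]
    have hcard2 : (Finset.univ : Finset (ZMod 3)ˣ).card = 2 := by decide
    rw [hcard2]
    have hiff : ∀ x : Fˣ, (x ^ q ^ t = x) ↔ x ^ (q ^ t - 1) = 1 := by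
      intro x
      constructor
      · intro h
        have : x ^ (q ^ t - 1) * x = 1 * x := by
          rw [one_mul, ← pow_succ]
          have : q ^ t - 1 + 1 = q ^ t := by omega
          rw [this, h]
        exact mul_right_cancel this
      · intro h
        have h2 : q ^ t - 1 + 1 = q ^ t := by omega
        calc x ^ q ^ t = x ^ (q ^ t - 1 + 1) := by rw [h2]
        _ = x := by rw [pow_succ, h, one_mul]
      
    have heq : Finset.univ.filter (fun x : Fˣ => x ^ q ^ t = x)
        = Finset.univ.filter (fun x : Fˣ => x ^ (q ^ t - 1) = 1) := by
      apply Finset.filter_congr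
      intro x _
      exact hiff x
    rw [heq]
    have hlt : (Finset.univ.filter (fun x : Fˣ => x ^ (q ^ t - 1) = 1)).card ≤ q ^ t - 1 := by
      have hqle : q ≤ q ^ t := Nat.le_self_pow (by omega) q
      have hpos : 0 < q ^ t - 1 := by omega
      calc (Finset.univ.filter (fun x : Fˣ => x ^ (q ^ t - 1) = 1)).card
          ≤ Multiset.card (Polynomial.nthRoots (q ^ t - 1) ((Units.coeHom F) 1)) :=
            card_nthRoots_subgroup_units (Units.coeHom F) (fun _ _ h => Units.ext h) hpos 1
      _ ≤ q ^ t - 1 := Polynomial.card_nthRoots _ _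
    exact le_trans (Nat.mul_le_mul_left 2 hlt) (Nat.mul_le_mul_left 2 (Nat.sub_le _ _))
  have h2 : bigF.card ≤ 2 * q ^ (k + 1) := by
    calc bigF.card ≤ ∑ t ∈ Finset.Icc 1 k,
        (Finset.univ.filter (fun zz : (ZMod 3)ˣ × Fˣ => zz.2 ^ q ^ t = zz.2)).card :=
          Finset.card_biUnion_le
    _ ≤ ∑ t ∈ Finset.Icc 1 k, 2 * q ^ t := by
          apply Finset.sum_le_sum
          intro t htmem
          exact hfilt t (Finset.mem_Icc.mp htmem).1
    _ = 2 * ∑ t ∈ Finset.Icc 1 k, q ^ t := by rw [Finset.mul_sum]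
    _ ≤ 2 * q ^ (k + 1) := by
          have := Nat.geomSum_lt (m := q) (s := Finset.Icc 1 k) (n := k + 1) (by omega)
            (fun x hx => by simp only [Finset.mem_Icc] at hx; omega)
          omega
  -- conclude over ℝ
  have hcast : (({z : (ZMod 3)ˣ × Fˣ |
      (twistedOrbit q z).ncard < (if q % 3 = 2 ∧ Odd a then 2 * a else a)}).ncard : ℝ)
      ≤ (2 * q : ℝ) * (q : ℝ) ^ (k : ℕ) := by
    have : (({z : (ZMod 3)ˣ × Fˣ |
        (twistedOrbit q z).ncard < (if q % 3 = 2 ∧ Odd a then 2 * a else a)}).ncard : ℝ)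
        ≤ ((2 * q ^ (k + 1) : ℕ) : ℝ) := by
      exact_mod_cast le_trans h1 h2
    calc _ ≤ ((2 * q ^ (k + 1) : ℕ) : ℝ) := this
    _ = (2 * q : ℝ) * (q : ℝ) ^ (k : ℕ) := by push_cast; ring
  refine le_trans hcast ?_
  apply mul_le_mul_of_nonneg_left _ (by positivity)
  have hq1 : (1 : ℝ) ≤ (q : ℝ) := by exact_mod_cast (by omega : 1 ≤ q)
  calc (q : ℝ) ^ (k : ℕ) = (q : ℝ) ^ ((k : ℕ) : ℝ) := (Real.rpow_natCast _ _).symm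
  _ ≤ (q : ℝ) ^ ((a : ℝ) / 2) := by
        apply Real.rpow_le_rpow_of_exponent_le hq1
        have : 2 * k ≤ a := by omega
        have := (by exact_mod_cast this : (2 : ℝ) * (k : ℕ) ≤ (a : ℝ))
        linarith
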